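/- If n is odd, then every n×n real matrix A has at least one real eigenvalue; consequently, for the Euler ODE X' = X·X on odd-dimensional W, every initial condition A whose real eigenvalues are not all zero leads to finite time blowup (forward or backward), and there is no open set of initial conditions with global-in-both-directions solutions given by X(t) = A·(Id - t·A)⁻¹. -/

import Mathlib

open Matrix Polynomial Filter

/-- A monic real polynomial of odd degree has a real root. -/
lemma monic_odd_natDegree_exists_root (p : ℝ[X]) (hm : p.Monic) (hodd : Odd p.natDegree) :
    ∃ x : ℝ, p.IsRoot x := by
  have hdeg : 0 < p.natDegree := by
    rcases hodd with ⟨k, hk⟩; omega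
  have hdeg' : 0 < p.degree := natDegree_pos_iff_degree_pos.mp hdeg
  -- behavior at +∞
  have htop : Tendsto (fun x => eval x p) atTop atTop :=
    p.tendsto_atTop_of_leadingCoeff_nonneg hdeg' (by rw [hm.leadingCoeff]; norm_num)
  -- behavior at -∞ via composition with -X
  have hq : (-(p.comp (-X))).leadingCoeff = 1 := by
    rw [leadingCoeff_neg, leadingCoeff_comp (by simp), hm.leadingCoeff]
    simp [leadingCoeff_neg, hodd.neg_one_pow]
  have hqne : -(p.comp (-X)) ≠ 0 := leadingCoeff_ne_zero.mp (by rw [hq]; norm_num)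
  have hqdeg : (-(p.comp (-X))).natDegree = p.natDegree := by
    rw [natDegree_neg, natDegree_comp]; simp
  have hqdeg' : 0 < (-(p.comp (-X))).degree := by
    apply natDegree_pos_iff_degree_pos.mp; omega
  have hbot : Tendsto (fun x => eval x (-(p.comp (-X)))) atTop atTop :=
    tendsto_atTop_of_leadingCoeff_nonneg _ hqdeg' (by rw [hq]; norm_num)
  obtain ⟨b, hb⟩ := (htop.eventually_ge_atTop 1).exists
  obtain ⟨c, hc⟩ := (hbot.eventually_ge_atTop 1).exists
  have hc' : eval (-c) p ≤ -1 := by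
    have : eval c (-(p.comp (-X))) = -eval (-c) p := by simp
    linarith [this ▸ hc]
  have hcont : Continuous fun x => eval x p := p.continuous
  have h0 : (0 : ℝ) ∈ Set.uIcc (eval (-c) p) (eval b p) := by
    rw [Set.mem_uIcc]; left; constructor <;> linarith
  obtain ⟨x, _, hx⟩ := intermediate_value_uIcc (hcont.continuousOn) h0
  exact ⟨x, hx⟩

lemma eval_charpoly' {n : ℕ} (A : Matrix (Fin n) (Fin n) ℝ) (lam : ℝ) :
    (A.charpoly).eval lam = (lam • (1 : Matrix (Fin n) (Fin n) ℝ) - A).det := by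
  rw [Matrix.charpoly, _root_.eval_det, matPolyEquiv_charmatrix]
  congr 1
  simp [Matrix.scalar_apply, Matrix.smul_one_eq_diagonal]

/-- If `n` is odd, every real `n × n` matrix has a real eigenvalue; every matrix with a
nonzero real eigenvalue leads to finite time blowup of `X' = X X` (some `Id - t • A` is
singular with `t ≠ 0`); and there is no nonempty open set of initial conditions whose
solutions `X(t) = A (Id - tA)⁻¹` are global in both time directions. -/
theorem odd_dimension_blowup {n : ℕ} (hn : Odd n) :
    (∀ A : Matrix (Fin n) (Fin n) ℝ,
        ∃ lam : ℝ, (lam • (1 : Matrix (Fin n) (Fin n) ℝ) - A).det = 0) ∧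
      (∀ A : Matrix (Fin n) (Fin n) ℝ,
        (∃ lam : ℝ, lam ≠ 0 ∧ (lam • (1 : Matrix (Fin n) (Fin n) ℝ) - A).det = 0) →
          ∃ t : ℝ, t ≠ 0 ∧ ¬ IsUnit (1 - t • A)) ∧
      ¬ ∃ U : Set (Matrix (Fin n) (Fin n) ℝ), IsOpen U ∧ U.Nonempty ∧
          ∀ A ∈ U, ∀ t : ℝ, IsUnit (1 - t • A) := by
  have part1 : ∀ A : Matrix (Fin n) (Fin n) ℝ,
      ∃ lam : ℝ, (lam • (1 : Matrix (Fin n) (Fin n) ℝ) - A).det = 0 := by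
    intro A
    have hdeg : A.charpoly.natDegree = n := by
      rw [Matrix.charpoly_natDegree_eq_dim]; simp
    obtain ⟨lam, hlam⟩ := monic_odd_natDegree_exists_root A.charpoly A.charpoly_monic
      (by rw [hdeg]; exact hn)
    exact ⟨lam, by rw [← eval_charpoly']; exact hlam⟩
  have part2 : ∀ A : Matrix (Fin n) (Fin n) ℝ,
      (∃ lam : ℝ, lam ≠ 0 ∧ (lam • (1 : Matrix (Fin n) (Fin n) ℝ) - A).det = 0) →
        ∃ t : ℝ, t ≠ 0 ∧ ¬ IsUnit (1 - t • A) := by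
    intro A ⟨lam, hlam, hdet⟩
    refine ⟨lam⁻¹, inv_ne_zero hlam, ?_⟩
    rw [Matrix.isUnit_iff_isUnit_det]
    have : (1 : Matrix (Fin n) (Fin n) ℝ) - lam⁻¹ • A
        = lam⁻¹ • (lam • (1 : Matrix (Fin n) (Fin n) ℝ) - A) := by
      rw [smul_sub, smul_smul, inv_mul_cancel₀ hlam, one_smul]
    rw [this, Matrix.det_smul, hdet, mul_zero]
    simp
  refine ⟨part1, part2, ?_⟩
  rintro ⟨U, hU, ⟨A, hA⟩, hglob⟩
  -- perturb A to have a nonzero real eigenvalue while staying in U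
  obtain ⟨lam, hlam⟩ := part1 A
  have hcont : Continuous fun ε : ℝ => A + ε • (1 : Matrix (Fin n) (Fin n) ℝ) :=
    continuous_const.add (continuous_id.smul continuous_const)
  have hmem : ∀ᶠ ε in nhds (0 : ℝ), A + ε • (1 : Matrix (Fin n) (Fin n) ℝ) ∈ U := by
    have := hcont.continuousAt (x := 0)
    have h0 : A + (0 : ℝ) • (1 : Matrix (Fin n) (Fin n) ℝ) = A := by simp
    exact this (hU.mem_nhds (by show A + (0:ℝ) • 1 ∈ U; rw [h0]; exact hA))
  -- pick ε ≠ 0 small with lam + ε ≠ 0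
  obtain ⟨ε, hεmem, hεne, hsum⟩ :
      ∃ ε : ℝ, A + ε • (1 : Matrix (Fin n) (Fin n) ℝ) ∈ U ∧ ε ≠ 0 ∧ lam + ε ≠ 0 := by
    have h1 : ∀ᶠ ε : ℝ in nhdsWithin 0 {0}ᶜ, A + ε • (1 : Matrix (Fin n) (Fin n) ℝ) ∈ U :=
      nhdsWithin_le_nhds hmem
    have h2 : ∀ᶠ ε : ℝ in nhdsWithin 0 {0}ᶜ, ε ≠ 0 :=
      eventually_mem_nhdsWithin
    by_cases hl : lam = 0
    · obtain ⟨ε, hε1, hε2⟩ := (h1.and h2).exists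
      exact ⟨ε, hε1, hε2, by rw [hl, zero_add]; exact hε2⟩
    · -- lam ≠ 0 : also need lam + ε ≠ 0, true eventually
      have h3 : ∀ᶠ ε : ℝ in nhdsWithin 0 {0}ᶜ, lam + ε ≠ 0 := by
        apply nhdsWithin_le_nhds
        have hc : ContinuousAt (fun ε : ℝ => lam + ε) 0 := by fun_prop
        have := hc.eventually_ne (by simpa using hl)
        simp at this; exact this
      obtain ⟨ε, ⟨hε1, hε2⟩, hε3⟩ := ((h1.and h2).and h3).exists
      exact ⟨ε, hε1, hε2, hε3⟩
  set B := A + ε • (1 : Matrix (Fin n) (Fin n) ℝ) with hB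
  have hBdet : ((lam + ε) • (1 : Matrix (Fin n) (Fin n) ℝ) - B).det = 0 := by
    have : (lam + ε) • (1 : Matrix (Fin n) (Fin n) ℝ) - B
        = lam • (1 : Matrix (Fin n) (Fin n) ℝ) - A := by
      rw [hB, add_smul]; abel
    rw [this]; exact hlam
  obtain ⟨t, ht, hnu⟩ := part2 B ⟨lam + ε, hsum, hBdet⟩
  exact hnu (hglob B hεmem t)
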